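/- Fix an integer m ≥ 1, ρ ∈ ℝ, and α ∈ (0, e^{−ρ}·(mπ)^{−1/2}), and set R* = √m·α/2. For each n ≥ 1, let K_n be the Laguerre-Gaussian kernel on ℝⁿ with parameters m, α, ρ. Then lim_{n→∞} −(1/n)·log( e^{−nρ}·∫_{B_n(√n·R)} K_n(x)² dx ) = −ρ − (1/2)·log(2πe) + 2R²/(α²m) − log R for every 0 < R < R*, and = −ρ − log α − (1/2)·log(mπ/2) for every R > R*. -/

import Mathlib

open MeasureTheory Filter Real
open scoped ENNReal Topology

/-- The generalized Laguerre polynomial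
`L_m^β(r) = Σ_{k=0}^m [Γ(m+β+1)/(Γ(β+k+1)·(m−k)!)]·(−r)^k/k!`. -/
noncomputable def laguerreL (m : ℕ) (β : ℝ) (r : ℝ) : ℝ :=
  ∑ k ∈ Finset.range (m + 1),
    (Real.Gamma ((m : ℝ) + β + 1) / (Real.Gamma (β + (k : ℝ) + 1) * (Nat.factorial (m - k)))) *
      ((-r) ^ k / (Nat.factorial k))

/-- The Laguerre-Gaussian kernel on `ℝⁿ` with parameters `m ≥ 1`, `α > 0`, `ρ ∈ ℝ`. -/
noncomputable def lagGaussKernel (m : ℕ) (α ρ : ℝ) (n : ℕ)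
    (x : EuclideanSpace ℝ (Fin n)) : ℝ :=
  (Real.exp (n * ρ) /
      (Real.Gamma ((m : ℝ) + (n : ℝ) / 2) /
        (Real.Gamma ((n : ℝ) / 2 + 1) * (Nat.factorial (m - 1))))) *
    laguerreL (m - 1) ((n : ℝ) / 2) (‖x‖ ^ 2 / (α ^ 2 * m)) *
    Real.exp (-(‖x‖ ^ 2 / (α ^ 2 * m)))

namespace LagAux

/-- `qprod n k = ∏_{j<k} (n/2 + 1 + j)`. -/
noncomputable def qprod (n k : ℕ) : ℝ := ∏ j ∈ Finset.range k, ((n:ℝ)/2 + 1 + j)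

lemma qprod_one_le (n k : ℕ) : 1 ≤ qprod n k := by
  calc (1:ℝ) = ∏ _j ∈ Finset.range k, (1:ℝ) := by simp
  _ ≤ _ := Finset.prod_le_prod (by intros; norm_num) (fun j _ => by
      have h1 : (0:ℝ) ≤ (n:ℝ) := Nat.cast_nonneg n
      have h2 : (0:ℝ) ≤ (j:ℝ) := Nat.cast_nonneg j
      linarith)

lemma qprod_pos (n k : ℕ) : 0 < qprod n k := lt_of_lt_of_le one_pos (qprod_one_le n k)

lemma gamma_add_nat (x : ℝ) (hx : 0 < x) (k : ℕ) :
    Real.Gamma (x + k) = Real.Gamma x * ∏ j ∈ Finset.range k, (x + j) := by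
  induction k with
  | zero => simp
  | succ k ih =>
    have hxk : x + (k:ℝ) ≠ 0 := by positivity
    have : x + ((k:ℕ)+1 : ℕ) = (x + (k:ℝ)) + 1 := by push_cast; ring
    rw [this, Real.Gamma_add_one hxk, ih, Finset.prod_range_succ]
    ring

lemma gamma_qprod (n k : ℕ) :
    Real.Gamma ((n:ℝ)/2 + k + 1) = Real.Gamma ((n:ℝ)/2 + 1) * qprod n k := by
  have h : (n:ℝ)/2 + k + 1 = ((n:ℝ)/2 + 1) + k := by ring
  rw [h, gamma_add_nat _ (by positivity), qprod]

lemma gamma_half_pos (n : ℕ) : 0 < Real.Gamma ((n:ℝ)/2 + 1) :=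
  Real.Gamma_pos_of_pos (by positivity)

/-- Representation of the Laguerre polynomial with `β = n/2`. -/
lemma laguerre_repr (M n : ℕ) (t : ℝ) :
    laguerreL M ((n:ℝ)/2) t
      = (qprod n M / (M.factorial : ℝ)) *
          ∑ k ∈ Finset.range (M+1), ((-1:ℝ)^k * (M.choose k) * (t^k / qprod n k)) := by
  rw [laguerreL, Finset.mul_sum]
  refine Finset.sum_congr rfl fun k hk => ?_
  have hkM : k ≤ M := Nat.lt_succ_iff.mp (Finset.mem_range.mp hk)
  have h1 : (M:ℝ) + (n:ℝ)/2 + 1 = (n:ℝ)/2 + (M:ℝ) + 1 := by ring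
  have h2 : (n:ℝ)/2 + (k:ℝ) + 1 = (n:ℝ)/2 + (k:ℝ) + 1 := rfl
  rw [h1, gamma_qprod n M, gamma_qprod n k]
  set G := Real.Gamma ((n:ℝ)/2 + 1) with hGdef
  have hG : G ≠ 0 := (gamma_half_pos n).ne'
  have hq := (qprod_pos n k).ne'
  have hfk : ((Nat.factorial k : ℝ)) ≠ 0 := by positivity
  have hfMk : ((Nat.factorial (M-k) : ℝ)) ≠ 0 := by positivity
  have hch : (M.choose k : ℝ) * (Nat.factorial k) * (Nat.factorial (M-k)) = (Nat.factorial M) := by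
    exact_mod_cast congrArg (Nat.cast : ℕ → ℝ) (Nat.choose_mul_factorial_mul_factorial hkM)
  have hfM : ((Nat.factorial M : ℝ)) ≠ 0 := by positivity
  rw [neg_pow]
  field_simp
  linear_combination (-(qprod n M * t^k)) * hch


-- STAGE 2
lemma binom_sum (M : ℕ) (t : ℝ) : ((t + 1:ℝ))^M = ∑ k ∈ Finset.range (M+1), (M.choose k : ℝ) * t^k := by
  rw [add_pow]
  exact Finset.sum_congr rfl fun k _ => by simp [mul_comm]

lemma laguerre_abs_le (M n : ℕ) {t : ℝ} (ht : 0 ≤ t) :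
    |laguerreL M ((n:ℝ)/2) t| ≤ (qprod n M / (M.factorial : ℝ)) * (1+t)^M := by
  have hc0 : (0:ℝ) < qprod n M / M.factorial :=
    div_pos (qprod_pos n M) (Nat.cast_pos.mpr M.factorial_pos)
  rw [laguerre_repr, abs_mul, abs_of_pos hc0]
  refine mul_le_mul_of_nonneg_left ?_ hc0.le
  calc |∑ k ∈ Finset.range (M+1), ((-1:ℝ)^k * (M.choose k) * (t^k / qprod n k))|
      ≤ ∑ k ∈ Finset.range (M+1), |(-1:ℝ)^k * (M.choose k) * (t^k / qprod n k)| :=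
        Finset.abs_sum_le_sum_abs _ _
    _ ≤ ∑ k ∈ Finset.range (M+1), (M.choose k : ℝ) * t^k := by
        refine Finset.sum_le_sum fun k _ => ?_
        rw [abs_mul, abs_mul, abs_pow, abs_neg, abs_one, one_pow, one_mul,
          abs_of_nonneg (by positivity : (0:ℝ) ≤ (M.choose k:ℝ)),
          abs_of_nonneg (div_nonneg (pow_nonneg ht k) (qprod_pos n k).le)]
        refine mul_le_mul_of_nonneg_left ?_ (by positivity)
        exact div_le_self (pow_nonneg ht k) (qprod_one_le n k)
    _ = (1+t)^M := by rw [add_comm 1 t, binom_sum]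

noncomputable def wprod (n k : ℕ) : ℝ := ∏ j ∈ Finset.range k, ((n:ℝ)/2) / ((n:ℝ)/2 + 1 + j)

lemma wprod_nonneg (n k : ℕ) : 0 ≤ wprod n k :=
  Finset.prod_nonneg fun j _ => by positivity

lemma wprod_le_one (n k : ℕ) : wprod n k ≤ 1 := by
  refine Finset.prod_le_one (fun j _ => by positivity) (fun j _ => ?_)
  rw [div_le_one (by positivity)]
  have h1 : (0:ℝ) ≤ (j:ℝ) := Nat.cast_nonneg j
  linarith

lemma wprod_anti (n : ℕ) {k M : ℕ} (hkM : k ≤ M) : wprod n M ≤ wprod n k := by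
  rw [wprod, wprod, ← Finset.prod_range_mul_prod_Ico _ hkM]
  have h1 : ∏ j ∈ Finset.Ico k M, ((n:ℝ)/2) / ((n:ℝ)/2 + 1 + j) ≤ 1 := by
    refine Finset.prod_le_one (fun j _ => by positivity) (fun j _ => ?_)
    rw [div_le_one (by positivity)]
    have h1 : (0:ℝ) ≤ (j:ℝ) := Nat.cast_nonneg j
    linarith
  calc (∏ j ∈ Finset.range k, ((n:ℝ)/2) / ((n:ℝ)/2 + 1 + j)) *
        ∏ j ∈ Finset.Ico k M, ((n:ℝ)/2) / ((n:ℝ)/2 + 1 + j)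
      ≤ (∏ j ∈ Finset.range k, ((n:ℝ)/2) / ((n:ℝ)/2 + 1 + j)) * 1 := by
        refine mul_le_mul_of_nonneg_left h1 (Finset.prod_nonneg fun j _ => by positivity)
    _ = _ := mul_one _

lemma wprod_tendsto (M : ℕ) : Tendsto (fun n : ℕ => wprod n M) atTop (𝓝 1) := by
  have h : Tendsto (fun n : ℕ => ∏ j ∈ Finset.range M, ((n:ℝ)/2) / ((n:ℝ)/2 + 1 + j)) atTop
      (𝓝 (∏ j ∈ Finset.range M, (1:ℝ))) := by
    refine tendsto_finset_prod _ fun j _ => ?_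
    have h2 : Tendsto (fun n : ℕ => (1 + (j:ℝ)) / ((n:ℝ)/2 + 1 + j)) atTop (𝓝 0) := by
      apply Tendsto.div_atTop (tendsto_const_nhds)
      apply tendsto_atTop_add_const_right
      apply tendsto_atTop_add_const_right
      exact (tendsto_natCast_atTop_atTop (R := ℝ)).atTop_div_const two_pos
    have h3 : ∀ᶠ n : ℕ in atTop, 1 - (1 + (j:ℝ)) / ((n:ℝ)/2 + 1 + j) = ((n:ℝ)/2) / ((n:ℝ)/2 + 1 + j) := by
      filter_upwards [eventually_ge_atTop 1] with n hn
      have hpos : (0:ℝ) < (n:ℝ)/2 + 1 + j := by positivity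
      field_simp
      ring
    have h0 : Tendsto (fun n : ℕ => 1 - (1 + (j:ℝ)) / ((n:ℝ)/2 + 1 + j)) atTop (𝓝 1) := by
      simpa using (tendsto_const_nhds (x := (1:ℝ))).sub h2
    exact h0.congr' h3
  unfold wprod
  simpa using h

lemma wprod_mul_qprod (n k : ℕ) : wprod n k * qprod n k = ((n:ℝ)/2)^k := by
  rw [wprod, qprod, ← Finset.prod_mul_distrib]
  calc ∏ j ∈ Finset.range k, ((n:ℝ)/2) / ((n:ℝ)/2 + 1 + j) * ((n:ℝ)/2 + 1 + j)
      = ∏ _j ∈ Finset.range k, ((n:ℝ)/2) := Finset.prod_congr rfl (fun j _ =>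
        div_mul_cancel₀ ((n:ℝ)/2) (ne_of_gt (by positivity : (0:ℝ) < (n:ℝ)/2 + 1 + j)))
    _ = ((n:ℝ)/2)^k := by rw [Finset.prod_const, Finset.card_range]

lemma t_pow_div_qprod (n : ℕ) (hn : 1 ≤ n) (t : ℝ) (k : ℕ) :
    t^k / qprod n k = (2*t/n)^k * wprod n k := by
  have hn0 : ((n:ℝ)) ≠ 0 := Nat.cast_ne_zero.mpr (by omega)
  have h1 : (2*t/(n:ℝ)) * ((n:ℝ)/2) = t := by field_simp
  calc t^k/qprod n k = ((2*t/(n:ℝ))*((n:ℝ)/2))^k / qprod n k := by rw [h1]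
    _ = (2*t/(n:ℝ))^k * (((n:ℝ)/2)^k / qprod n k) := by rw [mul_pow, mul_div_assoc]
    _ = (2*t/(n:ℝ))^k * (wprod n k * qprod n k / qprod n k) := by rw [wprod_mul_qprod]
    _ = (2*t/(n:ℝ))^k * wprod n k := by
        rw [mul_div_cancel_right₀ _ (qprod_pos n k).ne']


lemma laguerre_ge (M n : ℕ) (hn : 1 ≤ n) {t u₂ : ℝ} (hu0 : 0 ≤ u₂) (hu1 : 2*u₂ ≤ 1)
    (ht : 0 ≤ t) (htn : t ≤ n*u₂) :
    (qprod n M / (M.factorial : ℝ)) * ((1-2*u₂)^M - 2^M * (1 - wprod n M))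
      ≤ laguerreL M ((n:ℝ)/2) t := by
  have hnpos : (0:ℝ) < n := by exact_mod_cast hn
  set s : ℝ := 2*t/(n:ℝ) with hs
  have hs0 : 0 ≤ s := by positivity
  have hs2 : s ≤ 2*u₂ := by
    rw [hs, div_le_iff₀ hnpos]
    nlinarith
  have hs1 : s ≤ 1 := le_trans hs2 hu1
  have hsdq : ∀ k : ℕ, t^k / qprod n k = s^k * wprod n k := fun k => t_pow_div_qprod n hn t k
  clear_value s
  set S : ℝ := ∑ k ∈ Finset.range (M+1), ((-1:ℝ)^k * (M.choose k) * (t^k / qprod n k)) with hS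
  have hA : ∑ k ∈ Finset.range (M+1), ((-1:ℝ)^k * (M.choose k) * s^k) = (1-s)^M := by
    have hb := binom_sum M (-s)
    rw [show -s+1 = 1-s by ring] at hb
    rw [hb]
    exact Finset.sum_congr rfl fun k _ => by rw [neg_pow]; ring
  have hdiff : |S - (1-s)^M| ≤ 2^M * (1 - wprod n M) := by
    rw [← hA, hS, ← Finset.sum_sub_distrib]
    calc |∑ k ∈ Finset.range (M+1),
            ((-1:ℝ)^k * (M.choose k) * (t^k / qprod n k) - (-1:ℝ)^k * (M.choose k) * s^k)|
        ≤ ∑ k ∈ Finset.range (M+1),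
            |(-1:ℝ)^k * (M.choose k) * (t^k / qprod n k) - (-1:ℝ)^k * (M.choose k) * s^k| :=
          Finset.abs_sum_le_sum_abs _ _
      _ ≤ ∑ k ∈ Finset.range (M+1), (M.choose k : ℝ) * (1 - wprod n M) := by
          refine Finset.sum_le_sum fun k hk => ?_
          have hkM : k ≤ M := Nat.lt_succ_iff.mp (Finset.mem_range.mp hk)
          rw [hsdq k]
          have e1 : (-1:ℝ)^k * (M.choose k) * (s^k * wprod n k) - (-1:ℝ)^k * (M.choose k) * s^k
              = ((-1:ℝ)^k * (M.choose k) * s^k) * (wprod n k - 1) := by ring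
          rw [e1, abs_mul, abs_mul, abs_mul, abs_pow, abs_neg, abs_one, one_pow, one_mul,
            abs_of_nonneg (by positivity : (0:ℝ) ≤ (M.choose k:ℝ)),
            abs_of_nonneg (pow_nonneg hs0 k),
            abs_of_nonpos (by linarith [wprod_le_one n k] : wprod n k - 1 ≤ 0), neg_sub]
          have h2 : s^k ≤ 1 := pow_le_one₀ hs0 hs1
          have h3 : 1 - wprod n k ≤ 1 - wprod n M := by linarith [wprod_anti n hkM]
          have h4 : (0:ℝ) ≤ 1 - wprod n k := by linarith [wprod_le_one n k]
          calc (M.choose k : ℝ) * s^k * (1 - wprod n k)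
              ≤ (M.choose k : ℝ) * 1 * (1 - wprod n M) := by
                refine mul_le_mul (mul_le_mul_of_nonneg_left h2 (by positivity)) h3 h4 (by positivity)
            _ = (M.choose k : ℝ) * (1 - wprod n M) := by ring
      _ = 2^M * (1 - wprod n M) := by
          rw [← Finset.sum_mul]
          congr 1
          have := Nat.sum_range_choose M
          exact_mod_cast congrArg (Nat.cast : ℕ → ℝ) this
  have hAle : (1-2*u₂)^M ≤ (1-s)^M := by
    refine pow_le_pow_left₀ (by linarith) (by linarith) M
  have hSge : (1-2*u₂)^M - 2^M * (1 - wprod n M) ≤ S := by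
    have := abs_sub_le_iff.mp hdiff
    linarith [this.2]
  rw [laguerre_repr, ← hS]
  refine mul_le_mul_of_nonneg_left hSge ?_
  exact le_of_lt (div_pos (qprod_pos n M) (Nat.cast_pos.mpr M.factorial_pos))

lemma laguerre_eventually_ge (M : ℕ) {u₂ : ℝ} (hu0 : 0 ≤ u₂) (hu : 2*u₂ < 1) :
    ∃ δ : ℝ, 0 < δ ∧ ∀ᶠ n : ℕ in atTop, ∀ t : ℝ, 0 ≤ t → t ≤ n*u₂ →
      δ ≤ laguerreL M ((n:ℝ)/2) t := by
  have hδ0 : (0:ℝ) < (1-2*u₂)^M := pow_pos (by linarith) M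
  refine ⟨(1-2*u₂)^M / (2 * M.factorial), div_pos hδ0 (by positivity), ?_⟩
  have hlt : 1 - (1-2*u₂)^M / (2 * 2^M) < 1 := by
    have : (0:ℝ) < (1-2*u₂)^M / (2*2^M) := div_pos hδ0 (by positivity)
    linarith
  have hev : ∀ᶠ n : ℕ in atTop, 1 - (1-2*u₂)^M / (2 * 2^M) ≤ wprod n M :=
    (wprod_tendsto M).eventually (eventually_ge_nhds hlt)
  filter_upwards [hev, eventually_ge_atTop 1] with n hw hn t ht htn
  refine le_trans ?_ (laguerre_ge M n hn hu0 hu.le ht htn)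
  have h1 : 2^M * (1 - wprod n M) ≤ (1-2*u₂)^M/2 := by
    have h2 : 1 - wprod n M ≤ (1-2*u₂)^M / (2 * 2^M) := by linarith
    calc (2:ℝ)^M * (1 - wprod n M) ≤ 2^M * ((1-2*u₂)^M / (2 * 2^M)) := by
          exact mul_le_mul_of_nonneg_left h2 (by positivity)
      _ = (1-2*u₂)^M/2 := by field_simp
  have hbr : (1-2*u₂)^M/2 ≤ (1-2*u₂)^M - 2^M * (1 - wprod n M) := by linarith
  calc (1-2*u₂)^M / (2 * (M.factorial:ℝ))
      = (1/(M.factorial:ℝ)) * ((1-2*u₂)^M/2) := by ring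
    _ ≤ (qprod n M / (M.factorial:ℝ)) * ((1-2*u₂)^M - 2^M * (1 - wprod n M)) := by
        refine mul_le_mul ?_ hbr (by linarith) ?_
        · gcongr
          exact qprod_one_le n M
        · exact le_of_lt (div_pos (qprod_pos n M) (Nat.cast_pos.mpr M.factorial_pos))





noncomputable def hfun (c σ : ℝ) : ℝ := σ * Real.exp (-(2*σ^2/c))

lemma hfun_pos {c σ : ℝ} (hσ : 0 < σ) : 0 < hfun c σ := by
  unfold hfun; positivity

lemma xexp_le_one {x : ℝ} (hx : 0 < x) : x * Real.exp (1 - x) ≤ 1 := by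
  have h1 : x * Real.exp (1-x) = Real.exp (Real.log x + (1-x)) := by
    rw [Real.exp_add, Real.exp_log hx]
  rw [h1]
  have h2 := Real.log_le_sub_one_of_pos hx
  calc Real.exp (Real.log x + (1-x)) ≤ Real.exp 0 := Real.exp_le_exp.mpr (by linarith)
    _ = 1 := Real.exp_zero

lemma hfun_mono {c σ₁ σ : ℝ} (hc : 0 < c) (h1 : 0 < σ₁) (h12 : σ₁ ≤ σ)
    (hσ : σ ≤ Real.sqrt c / 2) : hfun c σ₁ ≤ hfun c σ := by
  have hσ0 : 0 < σ := lt_of_lt_of_le h1 h12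
  have hσsq : σ^2 ≤ c/4 := by
    have h2 : σ^2 ≤ (Real.sqrt c / 2)^2 := by
      refine pow_le_pow_left₀ hσ0.le hσ 2
    have h3 : (Real.sqrt c / 2)^2 = c/4 := by
      rw [div_pow, Real.sq_sqrt hc.le]; norm_num
    linarith
  -- key: σ₁ * exp (2*(σ^2-σ₁^2)/c) ≤ σ
  have key : σ₁ * Real.exp (2*(σ^2-σ₁^2)/c) ≤ σ := by
    have e1 : 2*(σ^2-σ₁^2)/c ≤ 1 - σ₁/σ := by
      rw [show (1:ℝ) - σ₁/σ = (σ - σ₁)/σ by field_simp]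
      rw [div_le_div_iff₀ hc hσ0]
      have hkey : 2*(σ+σ₁)*σ ≤ c := by nlinarith
      nlinarith [mul_le_mul_of_nonneg_right hkey (sub_nonneg.mpr h12)]
    have e2 : σ₁ * Real.exp (2*(σ^2-σ₁^2)/c) ≤ σ₁ * Real.exp (1 - σ₁/σ) :=
      mul_le_mul_of_nonneg_left (Real.exp_le_exp.mpr e1) h1.le
    have e3 : σ₁ * Real.exp (1 - σ₁/σ) ≤ σ := by
      have := xexp_le_one (x := σ₁/σ) (div_pos h1 hσ0)
      have e4 : σ₁ * Real.exp (1 - σ₁/σ) = (σ₁/σ * Real.exp (1 - σ₁/σ)) * σ := by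
        field_simp
      rw [e4]
      nlinarith [Real.exp_pos (1 - σ₁/σ)]
    linarith
  have e5 : hfun c σ₁ = (σ₁ * Real.exp (2*(σ^2-σ₁^2)/c)) * Real.exp (-(2*σ^2/c)) := by
    unfold hfun
    rw [mul_assoc, ← Real.exp_add]
    congr 2
    field_simp
    ring
  rw [e5]
  unfold hfun
  exact mul_le_mul_of_nonneg_right key (Real.exp_pos _).le

lemma hfun_le_max {c σ : ℝ} (hc : 0 < c) (hσ : 0 ≤ σ) :
    hfun c σ ≤ hfun c (Real.sqrt c / 2) := by
  obtain ⟨s, hs0, rfl⟩ : ∃ s, 0 < s ∧ c = s^2 :=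
    ⟨Real.sqrt c, Real.sqrt_pos.mpr hc, (Real.sq_sqrt hc.le).symm⟩
  rw [Real.sqrt_sq hs0.le]
  rcases eq_or_lt_of_le hσ with h | h
  · rw [← h]
    unfold hfun
    rw [zero_mul]
    positivity
  have hst : (0:ℝ) < s / 2 := by positivity
  unfold hfun
  have e1 : σ * Real.exp (-(2*σ^2/s^2)) = Real.exp (Real.log σ - 2*σ^2/s^2) := by
    rw [show Real.log σ - 2*σ^2/s^2 = Real.log σ + (-(2*σ^2/s^2)) by ring, Real.exp_add,
      Real.exp_log h]
  have e2 : s / 2 * Real.exp (-(2*(s/2)^2/s^2)) =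
      Real.exp (Real.log (s/2) - 2*(s/2)^2/s^2) := by
    rw [show Real.log (s/2) - 2*(s/2)^2/s^2
        = Real.log (s/2) + (-(2*(s/2)^2/s^2)) by ring, Real.exp_add, Real.exp_log hst]
  rw [e1, e2]
  apply Real.exp_le_exp.mpr
  have hlog : Real.log σ - Real.log (s/2) ≤ σ/(s/2) - 1 := by
    rw [← Real.log_div h.ne' hst.ne']
    exact Real.log_le_sub_one_of_pos (div_pos h hst)
  have e4 : σ/(s/2) = 2*σ/s := by
    field_simp
  have e5 : 2*(s/2)^2/s^2 = 1/2 := by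
    field_simp
  have key : 2*σ^2/s^2 - 1/2 - (2*σ/s - 1) = (2*σ - s)^2/(2*s^2) := by
    field_simp
    ring
  have h6 : 0 ≤ (2*σ - s)^2/(2*s^2) := by positivity
  rw [e5]
  rw [e4] at hlog
  linarith




lemma log_div_nat_tendsto : Tendsto (fun n : ℕ => Real.log n / n) atTop (𝓝 0) :=
  (Real.isLittleO_log_id_atTop.tendsto_div_nhds_zero).comp tendsto_natCast_atTop_atTop

lemma one_div_nat_tendsto : Tendsto (fun n : ℕ => 1 / (n : ℝ)) atTop (𝓝 0) :=
  tendsto_one_div_atTop_nhds_zero_nat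

/-- Stirling at log scale for the factorial. -/
lemma log_factorial_sub_tendsto :
    Tendsto (fun k : ℕ => Real.log (k.factorial) -
      (Real.log (2*k*π)/2 + k*(Real.log k - 1))) atTop (𝓝 0) := by
  have hne : ∀ᶠ k : ℕ in atTop, (Real.sqrt (2*k*π) * ((k:ℝ)/Real.exp 1)^k) ≠ 0 := by
    filter_upwards [eventually_ge_atTop 1] with k hk
    have hk0 : (0:ℝ) < k := by exact_mod_cast hk
    positivity
  have h1 : Tendsto (fun k : ℕ => (k.factorial : ℝ) /
      (Real.sqrt (2*k*π) * ((k:ℝ)/Real.exp 1)^k)) atTop (𝓝 1) := by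
    have := (Asymptotics.isEquivalent_iff_tendsto_one hne).mp
      Stirling.factorial_isEquivalent_stirling
    exact this
  have h2 : Tendsto (fun k : ℕ => Real.log ((k.factorial : ℝ) /
      (Real.sqrt (2*k*π) * ((k:ℝ)/Real.exp 1)^k))) atTop (𝓝 0) := by
    have hcont : ContinuousAt Real.log 1 := Real.continuousAt_log one_ne_zero
    have := hcont.tendsto.comp h1
    rw [Real.log_one] at this
    exact this
  refine h2.congr' ?_
  filter_upwards [eventually_ge_atTop 1] with k hk
  have hk0 : (0:ℝ) < k := by exact_mod_cast hk
  have hf : (0:ℝ) < k.factorial := by exact_mod_cast k.factorial_pos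
  have hs : (0:ℝ) < Real.sqrt (2*k*π) := Real.sqrt_pos.mpr (by positivity)
  have hp : (0:ℝ) < ((k:ℝ)/Real.exp 1)^k := by positivity
  rw [Real.log_div hf.ne' (by positivity), Real.log_mul hs.ne' hp.ne',
    Real.log_sqrt (by positivity), Real.log_pow, Real.log_div hk0.ne' (Real.exp_pos 1).ne',
    Real.log_exp]

/-- General form: `log (k n)! / n - log n / 2 → -log 2 / 2 - 1/2` when `k n ≈ n/2`. -/
lemma log_fact_div_limit (k : ℕ → ℕ)
    (hk : ∀ᶠ n : ℕ in atTop, |(k n : ℝ)/n - 1/2| ≤ 2/n) :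
    Tendsto (fun n : ℕ => Real.log ((k n).factorial) / n - Real.log n / 2) atTop
      (𝓝 (-(Real.log 2)/2 - 1/2)) := by
  -- k n → ∞
  have hklb : ∀ᶠ n : ℕ in atTop, (n:ℝ)/2 - 2 ≤ (k n : ℝ) := by
    filter_upwards [hk, eventually_ge_atTop 1] with n h hn
    have hn0 : (0:ℝ) < n := by exact_mod_cast hn
    have := abs_le.mp h
    have h2 : 1/2 - 2/n ≤ (k n:ℝ)/n := by linarith [this.1]
    calc (n:ℝ)/2 - 2 = (1/2 - 2/n) * n := by field_simp
      _ ≤ (k n:ℝ)/n * n := mul_le_mul_of_nonneg_right h2 hn0.le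
      _ = (k n : ℝ) := by field_simp
  have hkc : Tendsto (fun n : ℕ => (k n : ℝ)) atTop atTop := by
    refine tendsto_atTop_mono' atTop hklb ?_
    have : Tendsto (fun n : ℕ => (n:ℝ)) atTop atTop := tendsto_natCast_atTop_atTop
    exact (this.atTop_div_const two_pos).atTop_add tendsto_const_nhds
  have hkt : Tendsto k atTop atTop := tendsto_natCast_atTop_iff.mp hkc
  -- ratio → 1/2
  have hratio : Tendsto (fun n : ℕ => (k n : ℝ)/n) atTop (𝓝 (1/2)) := by
    have h0 : Tendsto (fun n : ℕ => (k n : ℝ)/n - 1/2) atTop (𝓝 0) := by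
      have hb : ∀ᶠ n : ℕ in atTop, ‖(k n : ℝ)/n - 1/2‖ ≤ 2/(n:ℝ) := by
        filter_upwards [hk] with n h
        rwa [Real.norm_eq_abs]
      have hz : Tendsto (fun n : ℕ => 2/(n:ℝ)) atTop (𝓝 0) :=
        (tendsto_const_nhds (x := (2:ℝ))).div_atTop tendsto_natCast_atTop_atTop
      exact squeeze_zero_norm' hb hz
    have := h0.add (tendsto_const_nhds (x := (1/2:ℝ)))
    simpa using this
  -- (k/n - 1/2) log n → 0
  have hlogterm : Tendsto (fun n : ℕ => ((k n : ℝ)/n - 1/2) * Real.log n) atTop (𝓝 0) := by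
    have hb : ∀ᶠ n : ℕ in atTop, ‖((k n : ℝ)/n - 1/2) * Real.log n‖ ≤ 2 * (Real.log n / n) := by
      filter_upwards [hk, eventually_ge_atTop 1] with n h hn
      have hn0 : (0:ℝ) < n := by exact_mod_cast hn
      have hlog0 : 0 ≤ Real.log n := Real.log_nonneg (by exact_mod_cast hn)
      rw [norm_mul, Real.norm_eq_abs, Real.norm_eq_abs, abs_of_nonneg hlog0]
      calc |(k n : ℝ)/n - 1/2| * Real.log n ≤ (2/n) * Real.log n :=
            mul_le_mul_of_nonneg_right h hlog0
        _ = 2 * (Real.log n / n) := by ring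
    have hz : Tendsto (fun n : ℕ => 2 * (Real.log n / n)) atTop (𝓝 0) := by
      simpa using (log_div_nat_tendsto.const_mul (2:ℝ))
    exact squeeze_zero_norm' hb hz
  -- E term
  have hE : Tendsto (fun n : ℕ => Real.log ((k n).factorial) -
      (Real.log (2*(k n)*π)/2 + (k n)*(Real.log (k n) - 1))) atTop (𝓝 0) :=
    log_factorial_sub_tendsto.comp hkt
  -- assemble
  have key : ∀ᶠ n : ℕ in atTop,
      Real.log ((k n).factorial) / n - Real.log n / 2
        = (Real.log ((k n).factorial) -
            (Real.log (2*(k n)*π)/2 + (k n)*(Real.log (k n) - 1))) * (1/n)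
          + (Real.log (2*(k n)*π)/2) * (1/n)
          + ((k n : ℝ)/n) * Real.log ((k n : ℝ)/n)
          + ((k n : ℝ)/n - 1/2) * Real.log n
          - (k n : ℝ)/n := by
    filter_upwards [eventually_ge_atTop 1, hkt.eventually (eventually_ge_atTop 1)] with n hn hkn
    have hn0 : (0:ℝ) < n := by exact_mod_cast hn
    have hkn0 : (0:ℝ) < (k n : ℝ) := by exact_mod_cast hkn
    have hlogkn : Real.log ((k n : ℝ)/n) = Real.log (k n) - Real.log n :=
      Real.log_div hkn0.ne' hn0.ne'
    rw [hlogkn]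
    field_simp
    ring
  have t1 : Tendsto (fun n : ℕ => (Real.log ((k n).factorial) -
      (Real.log (2*(k n)*π)/2 + (k n)*(Real.log (k n) - 1))) * (1/n)) atTop (𝓝 0) := by
    have := hE.mul one_div_nat_tendsto
    simpa using this
  have t2 : Tendsto (fun n : ℕ => (Real.log (2*(k n)*π)/2) * (1/n)) atTop (𝓝 0) := by
    have hb : ∀ᶠ n : ℕ in atTop, ‖(Real.log (2*(k n)*π)/2) * (1/(n:ℝ))‖
        ≤ Real.log (2*π) * (1/n) + Real.log n / n := by
      filter_upwards [hk, hkt.eventually (eventually_ge_atTop 1), eventually_ge_atTop 4]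
        with n h hkn hn4
      have hn0 : (0:ℝ) < n := by positivity
      have hkn0 : (1:ℝ) ≤ (k n : ℝ) := by exact_mod_cast hkn
      have hkler : (k n : ℝ) ≤ n := by
        have h2 : (k n:ℝ)/n ≤ 1/2 + 2/n := by linarith [(abs_le.mp h).2]
        have h3 : (k n:ℝ) ≤ (1/2 + 2/n)*n := by
          calc (k n:ℝ) = (k n:ℝ)/n * n := by field_simp
            _ ≤ (1/2 + 2/n)*n := mul_le_mul_of_nonneg_right h2 hn0.le
        have hn4' : (4:ℝ) ≤ n := by exact_mod_cast hn4
        have h4 : ((1:ℝ)/2 + 2/(n:ℝ))*(n:ℝ) = (n:ℝ)/2 + 2 := by field_simp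
        rw [h4] at h3
        linarith
      have hlog1 : 0 ≤ Real.log (2*(k n)*π) :=
        Real.log_nonneg (by nlinarith [pi_gt_three])
      have hlog2 : Real.log (2*(k n)*π) ≤ Real.log (2*π) + Real.log n := by
        calc Real.log (2*(k n)*π) ≤ Real.log (2*(n:ℝ)*π) :=
              Real.log_le_log (by nlinarith [pi_gt_three]) (by nlinarith [pi_gt_three])
          _ = Real.log (2*π) + Real.log n := by
              rw [show 2*(n:ℝ)*π = 2*π*n by ring,
                Real.log_mul (by positivity) hn0.ne']
      rw [Real.norm_eq_abs, abs_of_nonneg (by positivity)]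
      calc Real.log (2*(k n)*π)/2 * (1/n) ≤ (Real.log (2*π) + Real.log n) * (1/n) := by
            refine mul_le_mul_of_nonneg_right ?_ (by positivity)
            linarith
        _ = Real.log (2*π) * (1/n) + Real.log n / n := by ring
    have hz : Tendsto (fun n : ℕ => Real.log (2*π) * (1/(n:ℝ)) + Real.log n / n)
        atTop (𝓝 0) := by
      have := (one_div_nat_tendsto.const_mul (Real.log (2*π))).add log_div_nat_tendsto
      simpa using this
    exact squeeze_zero_norm' hb hz
  have t3 : Tendsto (fun n : ℕ => ((k n : ℝ)/n) * Real.log ((k n : ℝ)/n)) atTop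
      (𝓝 (-(Real.log 2)/2)) := by
    have hc : ContinuousAt (fun x : ℝ => x * Real.log x) (1/2) :=
      continuousAt_id.mul (Real.continuousAt_log (by norm_num))
    have := hc.tendsto.comp hratio
    have hval : (1/2 : ℝ) * Real.log (1/2) = -(Real.log 2)/2 := by
      rw [one_div, Real.log_inv]
      ring
    rw [hval] at this
    exact this
  have tall : Tendsto (fun n : ℕ =>
      (Real.log ((k n).factorial) -
        (Real.log (2*(k n)*π)/2 + (k n)*(Real.log (k n) - 1))) * (1/n)
      + (Real.log (2*(k n)*π)/2) * (1/n)
      + ((k n : ℝ)/n) * Real.log ((k n : ℝ)/n)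
      + ((k n : ℝ)/n - 1/2) * Real.log n
      - (k n : ℝ)/n) atTop (𝓝 (0 + 0 + (-(Real.log 2)/2) + 0 - 1/2)) :=
    (((t1.add t2).add t3).add hlogterm).sub hratio
  rw [show -(Real.log 2)/2 - 1/2 = 0 + 0 + (-(Real.log 2)/2) + 0 - 1/2 by ring]
  exact tall.congr' (key.mono fun n h => h.symm)


lemma half_ratio_bound : ∀ᶠ n : ℕ in atTop, |((n/2 : ℕ):ℝ)/(n:ℝ) - 1/2| ≤ 2/(n:ℝ) := by
  filter_upwards [eventually_ge_atTop 1] with n hn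
  have hn0 : (0:ℝ) < n := by exact_mod_cast hn
  have ha : 2*(n/2) ≤ n := by omega
  have hb : n ≤ 2*(n/2) + 1 := by omega
  have ha' : 2*((n/2:ℕ):ℝ) ≤ (n:ℝ) := by exact_mod_cast ha
  have hb' : (n:ℝ) ≤ 2*((n/2:ℕ):ℝ) + 1 := by exact_mod_cast hb
  have e : ((n/2:ℕ):ℝ)/(n:ℝ) - 1/2 = (2*((n/2:ℕ):ℝ) - n)/(2*n) := by field_simp
  rw [e, abs_le]
  constructor
  · rw [show -(2/(n:ℝ)) = (-4)/(2*n) by field_simp; ring]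
    exact (div_le_div_iff_of_pos_right (by positivity)).mpr (by linarith)
  · rw [show (2/(n:ℝ)) = 4/(2*n) by field_simp; ring]
    exact (div_le_div_iff_of_pos_right (by positivity)).mpr (by linarith)

lemma half_succ_ratio_bound : ∀ᶠ n : ℕ in atTop, |((n/2 + 1 : ℕ):ℝ)/(n:ℝ) - 1/2| ≤ 2/(n:ℝ) := by
  filter_upwards [eventually_ge_atTop 1] with n hn
  have hn0 : (0:ℝ) < n := by exact_mod_cast hn
  have ha : 2*(n/2) ≤ n := by omega
  have hb : n ≤ 2*(n/2) + 1 := by omega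
  have ha' : 2*((n/2:ℕ):ℝ) ≤ (n:ℝ) := by exact_mod_cast ha
  have hb' : (n:ℝ) ≤ 2*((n/2:ℕ):ℝ) + 1 := by exact_mod_cast hb
  have hc : ((n/2 + 1 : ℕ):ℝ) = ((n/2:ℕ):ℝ) + 1 := by push_cast; ring
  have e : ((n/2+1:ℕ):ℝ)/(n:ℝ) - 1/2 = (2*((n/2:ℕ):ℝ) + 2 - n)/(2*n) := by
    rw [hc]; field_simp
  rw [e, abs_le]
  constructor
  · rw [show -(2/(n:ℝ)) = (-4)/(2*n) by field_simp; ring]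
    exact (div_le_div_iff_of_pos_right (by positivity)).mpr (by linarith)
  · rw [show (2/(n:ℝ)) = 4/(2*n) by field_simp; ring]
    exact (div_le_div_iff_of_pos_right (by positivity)).mpr (by linarith)

lemma gamma_log_limit :
    Tendsto (fun n : ℕ => Real.log (Real.Gamma ((n:ℝ)/2 + 1)) / n - Real.log n / 2) atTop
      (𝓝 (-(Real.log 2)/2 - 1/2)) := by
  have low := log_fact_div_limit (fun n => n/2) half_ratio_bound
  have high := log_fact_div_limit (fun n => n/2 + 1) half_succ_ratio_bound
  refine tendsto_of_tendsto_of_tendsto_of_le_of_le' low high ?_ ?_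
  · filter_upwards [eventually_ge_atTop 2] with n hn
    have hn0 : (0:ℝ) < n := by positivity
    have hk1 : 1 ≤ n/2 := by omega
    have hsand : (Nat.factorial (n/2) : ℝ) ≤ Real.Gamma ((n:ℝ)/2 + 1) := by
      have hmono := Real.Gamma_strictMonoOn_Ici.monotoneOn
      have hk1' : (1:ℝ) ≤ ((n/2:ℕ):ℝ) := by exact_mod_cast hk1
      have ha2 : 2*(n/2) ≤ n := by omega
      have ha2' : 2*((n/2:ℕ):ℝ) ≤ (n:ℝ) := by exact_mod_cast ha2
      have hmem1 : ((n/2:ℕ):ℝ) + 1 ∈ Set.Ici (2:ℝ) := by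
        simp only [Set.mem_Ici]; linarith
      have hmem2 : (n:ℝ)/2 + 1 ∈ Set.Ici (2:ℝ) := by
        simp only [Set.mem_Ici]; linarith
      have hle : ((n/2:ℕ):ℝ) + 1 ≤ (n:ℝ)/2 + 1 := by linarith
      have := hmono hmem1 hmem2 hle
      rwa [Real.Gamma_nat_eq_factorial] at this
    have hpos : (0:ℝ) < (Nat.factorial (n/2) : ℝ) := by
      exact_mod_cast Nat.factorial_pos _
    have hlog := Real.log_le_log hpos hsand
    exact sub_le_sub_right ((div_le_div_iff_of_pos_right hn0).mpr hlog) _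
  · filter_upwards [eventually_ge_atTop 2] with n hn
    have hn0 : (0:ℝ) < n := by positivity
    have hsand : Real.Gamma ((n:ℝ)/2 + 1) ≤ (Nat.factorial (n/2 + 1) : ℝ) := by
      have hmono := Real.Gamma_strictMonoOn_Ici.monotoneOn
      have hb2 : n ≤ 2*(n/2) + 1 := by omega
      have hb2' : (n:ℝ) ≤ 2*((n/2:ℕ):ℝ) + 1 := by exact_mod_cast hb2
      have hn2 : (2:ℝ) ≤ (n:ℝ) := by exact_mod_cast hn
      have hmem2 : (n:ℝ)/2 + 1 ∈ Set.Ici (2:ℝ) := by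
        simp only [Set.mem_Ici]; linarith
      have hmem3 : ((n/2 + 1:ℕ):ℝ) + 1 ∈ Set.Ici (2:ℝ) := by
        simp only [Set.mem_Ici]
        have : (1:ℝ) ≤ ((n/2+1:ℕ):ℝ) := by exact_mod_cast Nat.le_add_left 1 (n/2)
        linarith
      have hle : (n:ℝ)/2 + 1 ≤ ((n/2 + 1:ℕ):ℝ) + 1 := by
        have : ((n/2+1:ℕ):ℝ) = ((n/2:ℕ):ℝ) + 1 := by push_cast; ring
        rw [this]
        linarith
      have := hmono hmem2 hmem3 hle
      rwa [Real.Gamma_nat_eq_factorial] at this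
    have hpos : (0:ℝ) < Real.Gamma ((n:ℝ)/2 + 1) := Real.Gamma_pos_of_pos (by positivity)
    have hlog := Real.log_le_log hpos hsand
    exact sub_le_sub_right ((div_le_div_iff_of_pos_right hn0).mpr hlog) _


-- STAGE 5 : the one-dimensional integral and its exponential rate
lemma log_affine_div (a b : ℝ) (ha : 0 < a) (hb : 0 ≤ b) :
    Tendsto (fun n : ℕ => Real.log (a*n+b)/n) atTop (𝓝 0) := by
  have hat : Tendsto (fun n : ℕ => a*(n:ℝ)+b) atTop atTop := by
    apply tendsto_atTop_add_const_right
    exact (tendsto_natCast_atTop_atTop (R := ℝ)).const_mul_atTop ha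
  have hb1 : ∀ᶠ n : ℕ in atTop, 1 ≤ a*(n:ℝ)+b := hat.eventually_ge_atTop 1
  have hbound : ∀ᶠ n : ℕ in atTop, ‖Real.log (a*n+b)/n‖ ≤ (|Real.log (a+b)| + Real.log n)/n := by
    filter_upwards [hb1, eventually_ge_atTop 1] with n h1 hn
    have hn0 : (0:ℝ) < n := by exact_mod_cast hn
    have hn1 : (1:ℝ) ≤ n := by exact_mod_cast hn
    have hlogpos : 0 ≤ Real.log (a*n+b) := Real.log_nonneg h1
    have hlognn : 0 ≤ Real.log n := Real.log_nonneg hn1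
    rw [Real.norm_eq_abs, abs_of_nonneg (by positivity)]
    refine div_le_div_of_nonneg_right ?_ hn0.le |>.trans_eq rfl
    calc Real.log (a*n+b) ≤ Real.log ((a+b)*n) := by
          refine Real.log_le_log (by linarith) ?_
          nlinarith
      _ = Real.log (a+b) + Real.log n := Real.log_mul (by positivity) hn0.ne'
      _ ≤ |Real.log (a+b)| + Real.log n := by
          have := le_abs_self (Real.log (a+b))
          linarith
  have hz : Tendsto (fun n : ℕ => (|Real.log (a+b)| + Real.log n)/n) atTop (𝓝 0) := by
    have h1 : Tendsto (fun n : ℕ => |Real.log (a+b)| * (1/(n:ℝ)) + Real.log n/n) atTop (𝓝 0) := by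
      have := (one_div_nat_tendsto.const_mul (|Real.log (a+b)|)).add log_div_nat_tendsto
      simpa using this
    refine h1.congr ?_
    intro n
    ring
  exact squeeze_zero_norm' hbound hz

/-- Rate of `C n * (√n * A)^(n-1) * exp (b*n) * (√n * D)`. -/
lemma rate_general (A D b : ℝ) (hA : 0 < A) (hD : 0 < D) (C : ℕ → ℝ)
    (hCpos : ∀ᶠ n : ℕ in atTop, 0 < C n)
    (hC : Tendsto (fun n : ℕ => Real.log (C n)/n) atTop (𝓝 0)) :
    Tendsto (fun n : ℕ =>
        Real.log (C n * (Real.sqrt n * A)^(n-1) * Real.exp (b*n) * (Real.sqrt n * D)) / n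
          - Real.log n / 2) atTop (𝓝 (Real.log A + b)) := by
  have key : ∀ᶠ n : ℕ in atTop,
      Real.log (C n * (Real.sqrt n * A)^(n-1) * Real.exp (b*n) * (Real.sqrt n * D)) / n
          - Real.log n / 2
        = Real.log (C n)/n + (Real.log D - Real.log A)*(1/n) + (Real.log A + b) := by
    filter_upwards [hCpos, eventually_ge_atTop 1] with n hCp hn
    have hn0 : (0:ℝ) < n := by exact_mod_cast hn
    have hsq : (0:ℝ) < Real.sqrt n := Real.sqrt_pos.mpr hn0
    have hP : (0:ℝ) < (Real.sqrt n * A)^(n-1) := pow_pos (by positivity) _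
    have hlsq : Real.log (Real.sqrt n) = Real.log n / 2 := Real.log_sqrt hn0.le
    rw [Real.log_mul (by positivity) (by positivity),
        Real.log_mul (by positivity) (Real.exp_ne_zero _),
        Real.log_mul hCp.ne' hP.ne',
        Real.log_pow, Real.log_mul hsq.ne' hA.ne', Real.log_mul hsq.ne' hD.ne',
        Real.log_exp, hlsq]
    have hcast : ((n-1:ℕ):ℝ) = (n:ℝ) - 1 := by
      have : 1 ≤ n := hn
      push_cast [this]
      ring
    rw [hcast]
    field_simp
    ring
  have lim : Tendsto (fun n : ℕ => Real.log (C n)/n + (Real.log D - Real.log A)*(1/n)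
      + (Real.log A + b)) atTop (𝓝 (0 + 0 + (Real.log A + b))) := by
    refine Tendsto.add (Tendsto.add hC ?_) tendsto_const_nhds
    simpa using (one_div_nat_tendsto.const_mul (Real.log D - Real.log A))
  rw [show Real.log A + b = 0 + 0 + (Real.log A + b) by ring]
  exact lim.congr' (key.mono fun n h => h.symm)

section Jint

variable (M : ℕ) (c R : ℝ)

/-- integrand of the radial integral. -/
noncomputable def gfun (n : ℕ) (y : ℝ) : ℝ :=
  y^(n-1) * (laguerreL M ((n:ℝ)/2) (y^2/c) * Real.exp (-(y^2/c)))^2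

/-- the radial integral itself. -/
noncomputable def Jint (n : ℕ) : ℝ :=
  ∫ y in Set.Ioc (0:ℝ) (Real.sqrt n * R), gfun M c n y

lemma laguerre_continuous (β : ℝ) : Continuous fun r : ℝ => laguerreL M β r := by
  unfold laguerreL
  refine continuous_finset_sum _ fun k _ => ?_
  fun_prop

lemma gfun_continuous (n : ℕ) : Continuous (gfun M c n) := by
  unfold gfun
  have h1 : Continuous fun y : ℝ => y^2/c := by fun_prop
  exact (continuous_pow _).mul
    ((((laguerre_continuous M ((n:ℝ)/2)).comp h1).mul (Real.continuous_exp.comp h1.neg)).pow 2)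

lemma gfun_nonneg (n : ℕ) {y : ℝ} (hy : 0 ≤ y) : 0 ≤ gfun M c n y :=
  mul_nonneg (pow_nonneg hy _) (sq_nonneg _)

lemma gfun_integrableOn (n : ℕ) (a b : ℝ) : IntegrableOn (gfun M c n) (Set.Ioc a b) :=
  (gfun_continuous M c n).integrableOn_Ioc

variable {c R}

/-- Pointwise upper bound for `gfun` on `(0, √n R]`. -/
lemma gfun_upper (hc : 0 < c) (hR : 0 < R) (n : ℕ) (hn : 1 ≤ n) {y : ℝ}
    (hy0 : 0 < y) (hyR : y ≤ Real.sqrt n * R) :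
    gfun M c n y ≤ ((qprod n M / (Nat.factorial M : ℝ)) * (1 + n*R^2/c)^M)^2 *
      (Real.sqrt n * hfun c (min R (Real.sqrt c / 2)))^(n-1) := by
  obtain ⟨k, rfl⟩ : ∃ k, n = k + 1 := ⟨n-1, by omega⟩
  simp only [Nat.add_sub_cancel]
  set n := k + 1 with hndef
  have hn0 : (0:ℝ) < n := by positivity
  have hsq : (0:ℝ) < Real.sqrt n := Real.sqrt_pos.mpr hn0
  set σ : ℝ := y / Real.sqrt n with hσdef
  have hσ0 : 0 < σ := div_pos hy0 hsq
  have hσR : σ ≤ R := by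
    rw [hσdef, div_le_iff₀ hsq]
    linarith [hyR]
  have hyσ : y = Real.sqrt n * σ := by
    rw [hσdef]
    field_simp
  -- Laguerre factor bound
  have ht0 : 0 ≤ y^2/c := by positivity
  have htle : y^2/c ≤ n*R^2/c := by
    have h1 : y^2 ≤ n*R^2 := by
      have : y^2 ≤ (Real.sqrt n * R)^2 := pow_le_pow_left₀ hy0.le hyR 2
      calc y^2 ≤ (Real.sqrt n * R)^2 := this
        _ = n * R^2 := by
            rw [mul_pow, Real.sq_sqrt hn0.le]
    exact div_le_div_of_nonneg_right h1 hc.le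
  have hL : (laguerreL M ((n:ℝ)/2) (y^2/c))^2
      ≤ ((qprod n M / (Nat.factorial M : ℝ)) * (1 + n*R^2/c)^M)^2 := by
    rw [← sq_abs]
    refine pow_le_pow_left₀ (abs_nonneg _) ?_ 2
    calc |laguerreL M ((n:ℝ)/2) (y^2/c)|
        ≤ (qprod n M / (Nat.factorial M : ℝ)) * (1 + y^2/c)^M := laguerre_abs_le M n ht0
      _ ≤ (qprod n M / (Nat.factorial M : ℝ)) * (1 + n*R^2/c)^M := by
          refine mul_le_mul_of_nonneg_left ?_
            (le_of_lt (div_pos (qprod_pos n M) (Nat.cast_pos.mpr M.factorial_pos)))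
          exact pow_le_pow_left₀ (by linarith) (by linarith) M
  -- radial factor
  have hexp2 : (Real.exp (-(y^2/c)))^2 = Real.exp (-(2*y^2/c)) := by
    rw [← Real.exp_nat_mul]
    norm_num
    ring_nf
  have hrad : y^k * Real.exp (-(2*y^2/c))
      ≤ (Real.sqrt n * hfun c (min R (Real.sqrt c / 2)))^k := by
    have hhH : hfun c σ ≤ hfun c (min R (Real.sqrt c / 2)) := by
      rcases le_total R (Real.sqrt c / 2) with h | h
      · rw [min_eq_left h]
        rcases eq_or_lt_of_le hσR with he | hlt
        · rw [he]
        · exact hfun_mono hc hσ0 hσR h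
      · rw [min_eq_right h]
        exact hfun_le_max hc hσ0.le
    have hy2 : y^2 = (n:ℝ) * σ^2 := by
      rw [hyσ, mul_pow, Real.sq_sqrt hn0.le]
    have hexpσ : Real.exp (-(2*y^2/c)) = (Real.exp (-(2*σ^2/c)))^n := by
      rw [← Real.exp_nat_mul, hy2]
      congr 1
      ring
    have hsplit : y^k * Real.exp (-(2*y^2/c))
        = (Real.sqrt n * hfun c σ)^k * Real.exp (-(2*σ^2/c)) := by
      rw [hexpσ, hyσ, show (Real.exp (-(2*σ^2/c)))^n = (Real.exp (-(2*σ^2/c)))^k *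
        Real.exp (-(2*σ^2/c)) from pow_succ _ _]
      unfold hfun
      rw [mul_pow, mul_pow]
      ring
    rw [hsplit]
    calc (Real.sqrt n * hfun c σ)^k * Real.exp (-(2*σ^2/c))
        ≤ (Real.sqrt n * hfun c σ)^k * 1 := by
          refine mul_le_mul_of_nonneg_left ?_ (pow_nonneg (mul_nonneg hsq.le (hfun_pos hσ0).le) _)
          · refine Real.exp_le_one_iff.mpr ?_
            have : (0:ℝ) ≤ 2*σ^2/c := by positivity
            linarith
      _ = (Real.sqrt n * hfun c σ)^k := mul_one _
      _ ≤ (Real.sqrt n * hfun c (min R (Real.sqrt c / 2)))^k := by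
          refine pow_le_pow_left₀ (mul_nonneg hsq.le (hfun_pos hσ0).le) ?_ _
          exact mul_le_mul_of_nonneg_left hhH hsq.le
  calc gfun M c n y = y^k * Real.exp (-(2*y^2/c)) * (laguerreL M ((n:ℝ)/2) (y^2/c))^2 := by
        unfold gfun
        rw [show n - 1 = k from rfl, mul_pow, hexp2]
        ring
    _ ≤ (Real.sqrt n * hfun c (min R (Real.sqrt c / 2)))^k *
          ((qprod n M / (Nat.factorial M : ℝ)) * (1 + n*R^2/c)^M)^2 := by
        have hmin : 0 < min R (Real.sqrt c / 2) := lt_min hR (by positivity)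
        refine mul_le_mul hrad hL (sq_nonneg _)
          (pow_nonneg (mul_nonneg hsq.le (hfun_pos hmin).le) _)
    _ = _ := by ring

end Jint

lemma const_div_nat (K : ℝ) : Tendsto (fun n : ℕ => K/(n:ℝ)) atTop (𝓝 0) := by
  have := one_div_nat_tendsto.const_mul K
  simp only [mul_zero] at this
  refine this.congr fun n => by ring

lemma Cn_log_tendsto (M : ℕ) {c R : ℝ} (hc : 0 < c) (hR : 0 < R) :
    Tendsto (fun n : ℕ =>
      Real.log (((qprod n M / (Nat.factorial M:ℝ)) * (1 + n*R^2/c)^M)^2)/(n:ℝ)) atTop (𝓝 0) := by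
  have hfact : (0:ℝ) < (Nat.factorial M : ℝ) := Nat.cast_pos.mpr M.factorial_pos
  have key : ∀ n : ℕ,
      Real.log (((qprod n M / (Nat.factorial M:ℝ)) * (1 + n*R^2/c)^M)^2)/(n:ℝ)
        = 2*(Real.log (qprod n M)/n) - (2*Real.log (Nat.factorial M))/n
          + (2*M)*(Real.log (1 + n*R^2/c)/n) := by
    intro n
    have h1 : (0:ℝ) < 1 + n*R^2/c := by positivity
    rw [Real.log_pow, Real.log_mul (div_pos (qprod_pos n M) hfact).ne' (pow_pos h1 M).ne',
      Real.log_div (qprod_pos n M).ne' hfact.ne', Real.log_pow]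
    push_cast
    ring
  have t1 : Tendsto (fun n : ℕ => Real.log (qprod n M)/(n:ℝ)) atTop (𝓝 0) := by
    have haff := log_affine_div (1/2) (1+M) (by norm_num) (by positivity)
    refine tendsto_of_tendsto_of_tendsto_of_le_of_le' tendsto_const_nhds
      (by have := haff.const_mul (M:ℝ); rwa [mul_zero] at this) ?_ ?_
    · filter_upwards [eventually_ge_atTop 1] with n hn
      have hn0 : (0:ℝ) < n := by exact_mod_cast hn
      exact div_nonneg (Real.log_nonneg (qprod_one_le n M)) hn0.le
    · filter_upwards [eventually_ge_atTop 1] with n hn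
      have hn0 : (0:ℝ) < n := by exact_mod_cast hn
      have hb : qprod n M ≤ ((1:ℝ)/2*n + (1+M))^M := by
        rw [qprod]
        calc ∏ j ∈ Finset.range M, ((n:ℝ)/2 + 1 + j)
            ≤ ∏ _j ∈ Finset.range M, ((1:ℝ)/2*n + (1+M)) := by
              refine Finset.prod_le_prod (fun j _ => by positivity) (fun j hj => ?_)
              have hjM : (j:ℝ) ≤ M := by
                have := Finset.mem_range.mp hj
                exact_mod_cast this.le
              linarith
          _ = ((1:ℝ)/2*n + (1+M))^M := by
              rw [Finset.prod_const, Finset.card_range]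
      have hlogb : Real.log (qprod n M) ≤ (M:ℝ) * Real.log ((1:ℝ)/2*n + (1+M)) := by
        calc Real.log (qprod n M) ≤ Real.log (((1:ℝ)/2*n + (1+M))^M) :=
              Real.log_le_log (qprod_pos n M) hb
          _ = (M:ℝ) * Real.log ((1:ℝ)/2*n + (1+M)) := by rw [Real.log_pow]
      calc Real.log (qprod n M)/(n:ℝ) ≤ ((M:ℝ) * Real.log ((1:ℝ)/2*n + (1+M)))/n :=
            div_le_div_of_nonneg_right hlogb hn0.le
        _ = (M:ℝ) * (Real.log ((1:ℝ)/2*n + (1+M))/n) := by ring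
  have t2 : Tendsto (fun n : ℕ => Real.log (1 + n*R^2/c)/(n:ℝ)) atTop (𝓝 0) := by
    have haff := log_affine_div (R^2/c) 1 (by positivity) (by norm_num)
    refine haff.congr fun n => ?_
    congr 2
    ring
  have hsum : Tendsto (fun n : ℕ => 2*(Real.log (qprod n M)/(n:ℝ))
      - (2*Real.log (Nat.factorial M))/n + (2*M)*(Real.log (1 + n*R^2/c)/n)) atTop
      (𝓝 (2*0 - 0 + (2*M)*0)) :=
    ((t1.const_mul 2).sub (const_div_nat _)).add (t2.const_mul ((2:ℝ)*(M:ℝ)))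
  rw [show (0:ℝ) = 2*0 - 0 + (2*(M:ℝ))*0 by ring]
  exact hsum.congr fun n => (key n).symm

lemma Jint_main (M : ℕ) {c R : ℝ} (hc : 0 < c) (hR : 0 < R) :
    (∀ᶠ n : ℕ in atTop, 0 < Jint M c R n) ∧
    Tendsto (fun n : ℕ => Real.log (Jint M c R n)/(n:ℝ) - Real.log n/2) atTop
      (𝓝 (Real.log (hfun c (min R (Real.sqrt c/2))))) := by
  set ρ₀ : ℝ := min R (Real.sqrt c/2) with hρ₀def
  have hρ₀ : 0 < ρ₀ := lt_min hR (by positivity)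
  have hρ₀R : ρ₀ ≤ R := min_le_left _ _
  have hρ₀s : ρ₀ ≤ Real.sqrt c/2 := min_le_right _ _
  have hHpos : 0 < hfun c ρ₀ := hfun_pos hρ₀
  have hlogH : Real.log (hfun c ρ₀) = Real.log ρ₀ - 2*ρ₀^2/c := by
    unfold hfun
    rw [Real.log_mul hρ₀.ne' (Real.exp_ne_zero _), Real.log_exp]
    ring
  -- LOWER bound machinery
  have lower : ∀ a, a < Real.log (hfun c ρ₀) →
      ∀ᶠ n : ℕ in atTop, (a < Real.log (Jint M c R n)/(n:ℝ) - Real.log n/2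
        ∧ 0 < Jint M c R n) := by
    intro a ha
    -- pick u
    have hφcont : ContinuousAt (fun u : ℝ => Real.log (ρ₀ - 2*u) - 2*(ρ₀-u)^2/c) 0 := by
      have h1 : ContinuousAt (fun u : ℝ => ρ₀ - 2*u) 0 := by fun_prop
      have h2 : ContinuousAt Real.log (ρ₀ - 2*0) := by
        rw [mul_zero, sub_zero]
        exact Real.continuousAt_log hρ₀.ne'
      have h3 : ContinuousAt (fun u : ℝ => Real.log (ρ₀ - 2*u)) 0 := by
        have := ContinuousAt.comp (x := (0:ℝ)) (f := fun u : ℝ => ρ₀ - 2*u) h2 h1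
        exact this
      exact h3.sub (by fun_prop)
    have hφ0 : Real.log (ρ₀ - 2*0) - 2*(ρ₀-0)^2/c = Real.log (hfun c ρ₀) := by
      rw [hlogH]
      norm_num
    have hev : ∀ᶠ u in 𝓝 (0:ℝ), a < Real.log (ρ₀ - 2*u) - 2*(ρ₀-u)^2/c := by
      have ht : Tendsto (fun u : ℝ => Real.log (ρ₀ - 2*u) - 2*(ρ₀-u)^2/c) (𝓝 0)
          (𝓝 (Real.log (hfun c ρ₀))) := by
        have h4 := hφcont.tendsto
        simp only [mul_zero, sub_zero] at h4
        rw [show Real.log ρ₀ - 2*ρ₀^2/c = Real.log (hfun c ρ₀) by rw [hlogH]] at h4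
        exact h4
      exact ht.eventually (eventually_gt_nhds ha)
    obtain ⟨u, ⟨hau, huρ⟩, hu0⟩ : ∃ u : ℝ, (a < Real.log (ρ₀ - 2*u) - 2*(ρ₀-u)^2/c
        ∧ u < ρ₀/4) ∧ 0 < u := by
      have e1 := eventually_nhdsWithin_of_eventually_nhds (s := Set.Ioi (0:ℝ)) hev
      have e2 := eventually_nhdsWithin_of_eventually_nhds (s := Set.Ioi (0:ℝ))
        (eventually_lt_nhds (show (0:ℝ) < ρ₀/4 by positivity))
      have e3 : ∀ᶠ u : ℝ in 𝓝[>] 0, 0 < u := eventually_mem_nhdsWithin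
      exact ((e1.and e2).and e3).exists
    set σ₁ : ℝ := ρ₀ - 2*u with hσ₁def
    set σ₂ : ℝ := ρ₀ - u with hσ₂def
    have hσ₁ : 0 < σ₁ := by rw [hσ₁def]; linarith
    have hσ₁₂ : σ₁ < σ₂ := by rw [hσ₁def, hσ₂def]; linarith
    have hσ₂R : σ₂ ≤ R := by rw [hσ₂def]; linarith
    have hσ₂s : σ₂ < Real.sqrt c/2 := by
      rw [hσ₂def]
      have := hρ₀s
      linarith
    have hσ₂0 : 0 < σ₂ := lt_trans hσ₁ hσ₁₂
    have hu₂ : 2*(σ₂^2/c) < 1 := by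
      have h1 : σ₂^2 < (Real.sqrt c/2)^2 := by nlinarith
      have h2 : (Real.sqrt c/2)^2 = c/4 := by rw [div_pow, Real.sq_sqrt hc.le]; norm_num
      have h3 : σ₂^2/c < 1/4 := by
        rw [div_lt_iff₀ hc]
        linarith
      linarith
    obtain ⟨δ, hδ, hδev⟩ := laguerre_eventually_ge M (u₂ := σ₂^2/c) (by positivity) hu₂
    set b : ℝ := -(2*σ₂^2/c) with hbdef
    have hLrate := rate_general σ₁ (σ₂-σ₁) b hσ₁ (by linarith) (fun _ => δ^2)
      (Eventually.of_forall fun _ => by positivity) (const_div_nat (Real.log (δ^2)))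
    have hab : a < Real.log σ₁ + b := by
      rw [hσ₁def, hbdef, hσ₂def]
      linarith [hau]
    have hevL : ∀ᶠ n : ℕ in atTop,
        a < Real.log ((fun _ => δ^2) n * (Real.sqrt n * σ₁)^(n-1) * Real.exp (b*n) *
          (Real.sqrt n * (σ₂-σ₁)))/(n:ℝ) - Real.log n/2 :=
      hLrate.eventually (eventually_gt_nhds hab)
    filter_upwards [hδev, hevL, eventually_ge_atTop 1] with n hδn hLn hn
    have hn0 : (0:ℝ) < n := by exact_mod_cast hn
    have hsq : (0:ℝ) < Real.sqrt n := Real.sqrt_pos.mpr hn0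
    set Ln : ℝ := δ^2 * (Real.sqrt n * σ₁)^(n-1) * Real.exp (b*n) * (Real.sqrt n * (σ₂-σ₁))
      with hLndef
    have hLpos : 0 < Ln := by
      rw [hLndef]
      have h1 : (0:ℝ) < Real.sqrt n * σ₁ := mul_pos hsq hσ₁
      have h2 : (0:ℝ) < σ₂ - σ₁ := by linarith
      exact mul_pos (mul_pos (mul_pos (pow_pos hδ 2) (pow_pos h1 _)) (Real.exp_pos _))
        (mul_pos hsq h2)
    -- pointwise bound on the inner interval
    have hptw : ∀ y ∈ Set.Ioc (Real.sqrt n * σ₁) (Real.sqrt n * σ₂),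
        δ^2 * (Real.sqrt n * σ₁)^(n-1) * Real.exp (b*n) ≤ gfun M c n y := by
      intro y hy
      have hy0 : 0 < y := lt_of_le_of_lt (mul_nonneg hsq.le hσ₁.le) hy.1
      have hy1 : Real.sqrt n * σ₁ ≤ y := hy.1.le
      have hy2 : y ≤ Real.sqrt n * σ₂ := hy.2
      have hysq : y^2 ≤ (n:ℝ) * σ₂^2 := by
        have := pow_le_pow_left₀ hy0.le hy2 2
        calc y^2 ≤ (Real.sqrt n * σ₂)^2 := this
          _ = (n:ℝ)*σ₂^2 := by rw [mul_pow, Real.sq_sqrt hn0.le]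
      have ht0 : 0 ≤ y^2/c := by positivity
      have htn : y^2/c ≤ (n:ℝ) * (σ₂^2/c) := by
        rw [← mul_div_assoc]
        exact div_le_div_of_nonneg_right hysq hc.le
      have hP : δ ≤ laguerreL M ((n:ℝ)/2) (y^2/c) := hδn _ ht0 htn
      have hP2 : δ^2 ≤ (laguerreL M ((n:ℝ)/2) (y^2/c))^2 :=
        pow_le_pow_left₀ hδ.le hP 2
      have hpow : (Real.sqrt n * σ₁)^(n-1) ≤ y^(n-1) :=
        pow_le_pow_left₀ (mul_nonneg hsq.le hσ₁.le) hy1 _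
      have hexp2 : (Real.exp (-(y^2/c)))^2 = Real.exp (-(2*y^2/c)) := by
        rw [← Real.exp_nat_mul]
        norm_num
        ring_nf
      have hexp : Real.exp (b*(n:ℝ)) ≤ Real.exp (-(2*y^2/c)) := by
        refine Real.exp_le_exp.mpr ?_
        rw [hbdef]
        have h4 : 2*y^2 ≤ 2*((n:ℝ)*σ₂^2) := by linarith
        have h5 : 2*y^2/c ≤ 2*(n:ℝ)*σ₂^2/c := by
          refine div_le_div_of_nonneg_right ?_ hc.le
          linarith
        have : -(2*σ₂^2/c)*(n:ℝ) = -(2*(n:ℝ)*σ₂^2/c) := by ring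
        rw [this]
        linarith
      calc δ^2 * (Real.sqrt n * σ₁)^(n-1) * Real.exp (b*n)
          ≤ (laguerreL M ((n:ℝ)/2) (y^2/c))^2 * y^(n-1) * Real.exp (-(2*y^2/c)) := by
            refine mul_le_mul (mul_le_mul hP2 hpow (by positivity) (sq_nonneg _)) hexp
              (Real.exp_pos _).le ?_
            exact mul_nonneg (sq_nonneg _) (pow_nonneg hy0.le _)
        _ = gfun M c n y := by
            unfold gfun
            rw [mul_pow, hexp2]
            ring
    -- integral lower bound
    have hsubset : Set.Ioc (Real.sqrt n * σ₁) (Real.sqrt n * σ₂)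
        ⊆ Set.Ioc (0:ℝ) (Real.sqrt n * R) := by
      intro y hy
      exact ⟨lt_of_le_of_lt (mul_nonneg hsq.le hσ₁.le) hy.1,
        le_trans hy.2 (mul_le_mul_of_nonneg_left hσ₂R hsq.le)⟩
    have hmeas : volume (Set.Ioc (Real.sqrt n * σ₁) (Real.sqrt n * σ₂)) ≠ ⊤ := by
      rw [Real.volume_Ioc]
      exact ENNReal.ofReal_ne_top
    have hconst := MeasureTheory.setIntegral_ge_of_const_le measurableSet_Ioc hmeas hptw
      ((gfun_continuous M c n).integrableOn_Ioc)
    have hmeasval : (volume (Set.Ioc (Real.sqrt n * σ₁) (Real.sqrt n * σ₂))).toReal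
        = Real.sqrt n * (σ₂ - σ₁) := by
      rw [Real.volume_Ioc, ENNReal.toReal_ofReal (by nlinarith)]
      ring
    rw [measureReal_def, hmeasval, smul_eq_mul, mul_comm (Real.sqrt n * (σ₂ - σ₁))] at hconst
    have hmono : ∫ y in Set.Ioc (Real.sqrt n * σ₁) (Real.sqrt n * σ₂), gfun M c n y
        ≤ Jint M c R n := by
      rw [Jint]
      refine MeasureTheory.setIntegral_mono_set (gfun_integrableOn M c n 0 _) ?_
        (HasSubset.Subset.eventuallyLE hsubset)
      refine (ae_restrict_iff' measurableSet_Ioc).2 (Eventually.of_forall fun y hy => ?_)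
      exact gfun_nonneg M c n hy.1.le
    have hLJ : Ln ≤ Jint M c R n := by
      rw [hLndef]
      calc δ^2 * (Real.sqrt n * σ₁)^(n-1) * Real.exp (b*n) * (Real.sqrt n * (σ₂-σ₁))
          ≤ ∫ y in Set.Ioc (Real.sqrt n * σ₁) (Real.sqrt n * σ₂), gfun M c n y := hconst
        _ ≤ Jint M c R n := hmono
    have hJpos : 0 < Jint M c R n := lt_of_lt_of_le hLpos hLJ
    refine ⟨?_, hJpos⟩
    have hloglog : Real.log Ln ≤ Real.log (Jint M c R n) := Real.log_le_log hLpos hLJ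
    have hdiv := div_le_div_of_nonneg_right hloglog hn0.le
    simp only [hLndef] at hLn
    linarith [hLn]
  -- UPPER bound machinery
  have upper : ∀ b', Real.log (hfun c ρ₀) < b' →
      ∀ᶠ n : ℕ in atTop, Real.log (Jint M c R n)/(n:ℝ) - Real.log n/2 < b' := by
    intro b' hb'
    set Cn : ℕ → ℝ := fun n => ((qprod n M / (Nat.factorial M:ℝ)) * (1 + n*R^2/c)^M)^2
      with hCndef
    have hCpos : ∀ᶠ n : ℕ in atTop, 0 < Cn n := by
      refine Eventually.of_forall fun n => ?_
      rw [hCndef]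
      exact pow_pos (mul_pos (div_pos (qprod_pos n M) (Nat.cast_pos.mpr M.factorial_pos))
        (pow_pos (by positivity) M)) 2
    have hUrate := rate_general (hfun c ρ₀) R 0 hHpos hR Cn hCpos (Cn_log_tendsto M hc hR)
    have hevU : ∀ᶠ n : ℕ in atTop,
        Real.log (Cn n * (Real.sqrt n * hfun c ρ₀)^(n-1) * Real.exp (0*n) *
          (Real.sqrt n * R))/(n:ℝ) - Real.log n/2 < b' := by
      refine hUrate.eventually (eventually_lt_nhds ?_)
      simpa using hb'
    have hposall := (lower (Real.log (hfun c ρ₀) - 1) (by linarith)).mono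
      (fun n h => h.2)
    filter_upwards [hevU, hposall, eventually_ge_atTop 1] with n hU hJp hn
    have hn0 : (0:ℝ) < n := by exact_mod_cast hn
    have hsq0 : (0:ℝ) < Real.sqrt n := Real.sqrt_pos.mpr hn0
    have hJU : Jint M c R n ≤ Cn n * (Real.sqrt n * hfun c ρ₀)^(n-1) * Real.exp (0*n) *
        (Real.sqrt n * R) := by
      have hbound : ∀ y ∈ Set.Ioc (0:ℝ) (Real.sqrt n * R), ‖gfun M c n y‖
          ≤ Cn n * (Real.sqrt n * hfun c ρ₀)^(n-1) := by
        intro y hy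
        rw [Real.norm_eq_abs, abs_of_nonneg (gfun_nonneg M c n hy.1.le)]
        exact gfun_upper M hc hR n hn hy.1 hy.2
      have hfin : volume (Set.Ioc (0:ℝ) (Real.sqrt n * R)) < ⊤ := by
        rw [Real.volume_Ioc]
        exact ENNReal.ofReal_lt_top
      have hmeasv : (volume (Set.Ioc (0:ℝ) (Real.sqrt n * R))).toReal = Real.sqrt n * R := by
        rw [Real.volume_Ioc, sub_zero, ENNReal.toReal_ofReal (by positivity)]
      have hnormle := MeasureTheory.norm_setIntegral_le_of_norm_le_const hfin hbound
      rw [measureReal_def, hmeasv] at hnormle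
      calc Jint M c R n ≤ ‖Jint M c R n‖ := le_abs_self _
        _ = ‖∫ y in Set.Ioc (0:ℝ) (Real.sqrt n * R), gfun M c n y‖ := rfl
        _ ≤ Cn n * (Real.sqrt n * hfun c ρ₀)^(n-1) * (Real.sqrt n * R) := hnormle
        _ = Cn n * (Real.sqrt n * hfun c ρ₀)^(n-1) * Real.exp (0*n) * (Real.sqrt n * R) := by
            rw [zero_mul, Real.exp_zero]
            ring
    have hloglog := Real.log_le_log hJp hJU
    have hdiv := div_le_div_of_nonneg_right hloglog hn0.le
    linarith [hU]
  constructor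
  · exact (lower (Real.log (hfun c ρ₀) - 1) (by linarith)).mono (fun n h => h.2)
  · exact tendsto_order.2 ⟨fun a ha => (lower a ha).mono (fun n h => h.1), upper⟩

-- STAGE 6 : radial reduction
lemma qprod_log_tendsto (M : ℕ) :
    Tendsto (fun n : ℕ => Real.log (qprod n M)/(n:ℝ)) atTop (𝓝 0) := by
  have haff := log_affine_div (1/2) (1+M) (by norm_num) (by positivity)
  refine tendsto_of_tendsto_of_tendsto_of_le_of_le' tendsto_const_nhds
    (by have := haff.const_mul (M:ℝ); rwa [mul_zero] at this) ?_ ?_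
  · filter_upwards [eventually_ge_atTop 1] with n hn
    have hn0 : (0:ℝ) < n := by exact_mod_cast hn
    exact div_nonneg (Real.log_nonneg (qprod_one_le n M)) hn0.le
  · filter_upwards [eventually_ge_atTop 1] with n hn
    have hn0 : (0:ℝ) < n := by exact_mod_cast hn
    have hb : qprod n M ≤ ((1:ℝ)/2*n + (1+M))^M := by
      rw [qprod]
      calc ∏ j ∈ Finset.range M, ((n:ℝ)/2 + 1 + j)
          ≤ ∏ _j ∈ Finset.range M, ((1:ℝ)/2*n + (1+M)) := by
            refine Finset.prod_le_prod (fun j _ => by positivity) (fun j hj => ?_)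
            have hjM : (j:ℝ) ≤ M := by
              have := Finset.mem_range.mp hj
              exact_mod_cast this.le
            linarith
        _ = ((1:ℝ)/2*n + (1+M))^M := by
            rw [Finset.prod_const, Finset.card_range]
    have hlogb : Real.log (qprod n M) ≤ (M:ℝ) * Real.log ((1:ℝ)/2*n + (1+M)) := by
      calc Real.log (qprod n M) ≤ Real.log (((1:ℝ)/2*n + (1+M))^M) :=
            Real.log_le_log (qprod_pos n M) hb
        _ = (M:ℝ) * Real.log ((1:ℝ)/2*n + (1+M)) := by rw [Real.log_pow]
    calc Real.log (qprod n M)/(n:ℝ) ≤ ((M:ℝ) * Real.log ((1:ℝ)/2*n + (1+M)))/n :=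
          div_le_div_of_nonneg_right hlogb hn0.le
      _ = (M:ℝ) * (Real.log ((1:ℝ)/2*n + (1+M))/n) := by ring

lemma integral_ball (M n : ℕ) (hn : 1 ≤ n) (c : ℝ) (r : ℝ) (A : ℝ) :
    ∫ x in Metric.closedBall (0 : EuclideanSpace ℝ (Fin n)) r,
      (A * laguerreL M ((n:ℝ)/2) (‖x‖^2/c) * Real.exp (-(‖x‖^2/c)))^2
    = A^2 * ((n : ℝ) * (volume (Metric.ball (0 : EuclideanSpace ℝ (Fin n)) 1)).toReal *
        ∫ y in Set.Ioc (0:ℝ) r, gfun M c n y) := by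
  haveI : Nonempty (Fin n) := ⟨⟨0, hn⟩⟩
  haveI : Nontrivial (EuclideanSpace ℝ (Fin n)) := by infer_instance
  set Ffun : ℝ → ℝ := fun y => (laguerreL M ((n:ℝ)/2) (y^2/c) * Real.exp (-(y^2/c)))^2
    with hFdef
  have step1 : ∫ x in Metric.closedBall (0 : EuclideanSpace ℝ (Fin n)) r,
      (A * laguerreL M ((n:ℝ)/2) (‖x‖^2/c) * Real.exp (-(‖x‖^2/c)))^2
      = A^2 * ∫ x in Metric.closedBall (0 : EuclideanSpace ℝ (Fin n)) r, Ffun ‖x‖ := by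
    rw [← MeasureTheory.integral_const_mul]
    refine MeasureTheory.integral_congr_ae (Filter.Eventually.of_forall fun x => ?_)
    rw [hFdef]
    ring
  rw [step1]
  congr 1
  have step2 : ∫ x in Metric.closedBall (0 : EuclideanSpace ℝ (Fin n)) r, Ffun ‖x‖
      = ∫ x : EuclideanSpace ℝ (Fin n), (Set.indicator (Set.Iic r) Ffun) ‖x‖ := by
    rw [← MeasureTheory.integral_indicator (measurableSet_closedBall)]
    refine MeasureTheory.integral_congr_ae (Filter.Eventually.of_forall fun x => ?_)
    by_cases h : ‖x‖ ≤ r <;>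
      simp [Set.indicator_apply, Set.mem_Iic, Metric.mem_closedBall, dist_zero_right, h]
  rw [step2, MeasureTheory.integral_fun_norm_addHaar volume (Set.indicator (Set.Iic r) Ffun)]
  rw [finrank_euclideanSpace_fin]
  have step3 : ∫ y in Set.Ioi (0:ℝ), y^(n-1) • (Set.indicator (Set.Iic r) Ffun) y
      = ∫ y in Set.Ioc (0:ℝ) r, gfun M c n y := by
    have hind : ∀ y : ℝ, y^(n-1) • (Set.indicator (Set.Iic r) Ffun) y
        = Set.indicator (Set.Iic r) (fun y => y^(n-1) * Ffun y) y := by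
      intro y
      by_cases h : y ∈ Set.Iic r
      · rw [Set.indicator_of_mem h, Set.indicator_of_mem h, smul_eq_mul]
      · rw [Set.indicator_of_notMem h, Set.indicator_of_notMem h, smul_eq_mul, mul_zero]
    rw [MeasureTheory.integral_congr_ae (Filter.Eventually.of_forall fun y => hind y)]
    rw [MeasureTheory.setIntegral_indicator measurableSet_Iic, Set.Ioi_inter_Iic]
    rfl
  rw [step3, nsmul_eq_mul, smul_eq_mul, measureReal_def]
  ring

lemma master (m : ℕ) (hm : 1 ≤ m) (ρ α : ℝ) (hα : 0 < α) {R : ℝ} (hR : 0 < R) :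
    Tendsto (fun n : ℕ => -(1 / (n : ℝ)) *
        Real.log (Real.exp (-(n * ρ)) *
          ∫ x in Metric.closedBall (0 : EuclideanSpace ℝ (Fin n)) (Real.sqrt n * R),
            (lagGaussKernel m α ρ n x) ^ 2)) atTop
      (𝓝 (-ρ - (1/2)*Real.log π + (-(Real.log 2)/2 - 1/2)
        - Real.log (hfun (α^2*(m:ℝ)) (min R (Real.sqrt (α^2*(m:ℝ))/2))))) := by
  obtain ⟨M, rfl⟩ : ∃ M, m = M + 1 := ⟨m-1, by omega⟩
  set c : ℝ := α^2*((M+1:ℕ):ℝ) with hcdef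
  have hmpos : (0:ℝ) < ((M+1:ℕ):ℝ) := by positivity
  have hc : 0 < c := by rw [hcdef]; positivity
  obtain ⟨hJpos, hJlim⟩ := Jint_main M hc hR
  have hfactpos : (0:ℝ) < (Nat.factorial M : ℝ) := Nat.cast_pos.mpr M.factorial_pos
  -- limit of the model sequence
  have hq2 : Tendsto (fun n : ℕ =>
      2*((Real.log (qprod n M) - Real.log (Nat.factorial M))/(n:ℝ))) atTop (𝓝 0) := by
    have h1 : Tendsto (fun n : ℕ => Real.log (qprod n M)/(n:ℝ)
        - Real.log (Nat.factorial M)/(n:ℝ)) atTop (𝓝 (0 - 0)) :=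
      (qprod_log_tendsto M).sub (const_div_nat _)
    have h2 := h1.const_mul (2:ℝ)
    simp only [sub_zero, mul_zero] at h2
    refine h2.congr fun n => by ring
  have hGlim : Tendsto (fun n : ℕ =>
      -ρ + 2*((Real.log (qprod n M) - Real.log (Nat.factorial M))/(n:ℝ))
      - Real.log n/(n:ℝ) - (1/2)*Real.log π
      + (Real.log (Real.Gamma ((n:ℝ)/2+1))/(n:ℝ) - Real.log n/2)
      - (Real.log (Jint M c R n)/(n:ℝ) - Real.log n/2)) atTop
      (𝓝 ((-ρ + 0 - 0 - (1/2)*Real.log π + (-(Real.log 2)/2 - 1/2))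
        - Real.log (hfun c (min R (Real.sqrt c/2))))) := by
    refine Tendsto.sub ?_ hJlim
    refine Tendsto.add ?_ gamma_log_limit
    refine Tendsto.sub ?_ tendsto_const_nhds
    refine Tendsto.sub ?_ log_div_nat_tendsto
    exact (tendsto_const_nhds (x := -ρ)).add hq2
  -- eventual equality
  have hevEq : ∀ᶠ n : ℕ in atTop,
      -(1 / (n : ℝ)) * Real.log (Real.exp (-(n * ρ)) *
          ∫ x in Metric.closedBall (0 : EuclideanSpace ℝ (Fin n)) (Real.sqrt n * R),
            (lagGaussKernel (M+1) α ρ n x) ^ 2)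
        = -ρ + 2*((Real.log (qprod n M) - Real.log (Nat.factorial M))/(n:ℝ))
          - Real.log n/(n:ℝ) - (1/2)*Real.log π
          + (Real.log (Real.Gamma ((n:ℝ)/2+1))/(n:ℝ) - Real.log n/2)
          - (Real.log (Jint M c R n)/(n:ℝ) - Real.log n/2) := by
    filter_upwards [hJpos, eventually_ge_atTop 1] with n hJ hn
    have hn0 : (0:ℝ) < n := by exact_mod_cast hn
    have hΓ : (0:ℝ) < Real.Gamma ((n:ℝ)/2+1) := Real.Gamma_pos_of_pos (by positivity)
    set c0 : ℝ := qprod n M / (Nat.factorial M : ℝ) with hc0def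
    have hc0 : 0 < c0 := div_pos (qprod_pos n M) hfactpos
    set A : ℝ := Real.exp ((n:ℝ)*ρ) / c0 with hAdef
    have hA : 0 < A := div_pos (Real.exp_pos _) hc0
    -- kernel identity
    have hGamEq : Real.Gamma (((M+1:ℕ):ℝ) + (n:ℝ)/2)
        = Real.Gamma ((n:ℝ)/2+1) * qprod n M := by
      rw [show ((M+1:ℕ):ℝ) + (n:ℝ)/2 = (n:ℝ)/2 + (M:ℝ) + 1 by push_cast; ring]
      exact gamma_qprod n M
    have hker : ∀ x : EuclideanSpace ℝ (Fin n), lagGaussKernel (M+1) α ρ n x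
        = A * laguerreL M ((n:ℝ)/2) (‖x‖^2/c) * Real.exp (-(‖x‖^2/c)) := by
      intro x
      have hpre : Real.exp ((n:ℝ)*ρ) / (Real.Gamma ((n:ℝ)/2+1) * qprod n M /
          (Real.Gamma ((n:ℝ)/2+1) * (Nat.factorial M : ℝ))) = A := by
        rw [hAdef, hc0def, mul_div_mul_left _ _ hΓ.ne']
      rw [lagGaussKernel]
      simp only [Nat.add_sub_cancel]
      rw [hGamEq, ← hcdef, hpre]
    -- integral identity
    have hint : ∫ x in Metric.closedBall (0 : EuclideanSpace ℝ (Fin n)) (Real.sqrt n * R),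
        (lagGaussKernel (M+1) α ρ n x) ^ 2
        = A^2 * ((n : ℝ) *
            (volume (Metric.ball (0 : EuclideanSpace ℝ (Fin n)) 1)).toReal *
            Jint M c R n) := by
      calc ∫ x in Metric.closedBall (0 : EuclideanSpace ℝ (Fin n)) (Real.sqrt n * R),
          (lagGaussKernel (M+1) α ρ n x) ^ 2
          = ∫ x in Metric.closedBall (0 : EuclideanSpace ℝ (Fin n)) (Real.sqrt n * R),
            (A * laguerreL M ((n:ℝ)/2) (‖x‖^2/c) * Real.exp (-(‖x‖^2/c))) ^ 2 := by
            simp only [hker]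
        _ = _ := integral_ball M n hn c (Real.sqrt n * R) A
    -- volume value
    haveI : Nonempty (Fin n) := ⟨⟨0, hn⟩⟩
    set V : ℝ := (volume (Metric.ball (0 : EuclideanSpace ℝ (Fin n)) 1)).toReal with hVdef
    have hVeq : V = Real.sqrt π ^ n / Real.Gamma ((n:ℝ)/2+1) := by
      rw [hVdef, EuclideanSpace.volume_ball]
      simp only [Fintype.card_fin]
      rw [ENNReal.ofReal_one, one_pow, one_mul, ENNReal.toReal_ofReal (by positivity)]
    have hV : 0 < V := by
      rw [hVeq]
      positivity
    have hVlog : Real.log V = (n:ℝ)/2*Real.log π - Real.log (Real.Gamma ((n:ℝ)/2+1)) := by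
      rw [hVeq, Real.log_div (by positivity) hΓ.ne', Real.log_pow,
        Real.log_sqrt Real.pi_pos.le]
      ring
    -- assemble the log
    rw [hint]
    have hprod : (0:ℝ) < (n:ℝ) * V * Jint M c R n := by positivity
    rw [Real.log_mul (Real.exp_ne_zero _) (by positivity), Real.log_exp,
      Real.log_mul (pow_pos hA 2).ne' hprod.ne',
      Real.log_mul (by positivity : ((n:ℝ)*V) ≠ 0) hJ.ne',
      Real.log_mul hn0.ne' hV.ne', Real.log_pow, hVlog,
      hAdef, Real.log_div (Real.exp_ne_zero _) hc0.ne', Real.log_exp,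
      hc0def, Real.log_div (qprod_pos n M).ne' hfactpos.ne']
    push_cast
    field_simp
    ring
  rw [show (-ρ - (1/2)*Real.log π + (-(Real.log 2)/2 - 1/2)
      - Real.log (hfun (α^2*((M+1:ℕ)):ℝ) (min R (Real.sqrt (α^2*((M+1:ℕ):ℝ))/2))))
      = ((-ρ + 0 - 0 - (1/2)*Real.log π + (-(Real.log 2)/2 - 1/2))
        - Real.log (hfun c (min R (Real.sqrt c/2)))) by rw [← hcdef]; ring_nf]
  exact hGlim.congr' (hevEq.mono fun n h => h.symm)

end LagAux

/-- Exponential rate of decay of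
`e^{−nρ}·∫_{B_n(√n·R)} K_n²` for Laguerre-Gaussian kernels, with phase transition at
`R* = √m·α/2`. -/
theorem laguerre_gaussian_rate (m : ℕ) (hm : 1 ≤ m) (ρ α : ℝ)
    (hα_pos : 0 < α) (hα_lt : α < Real.exp (-ρ) * ((m : ℝ) * π) ^ (-(1 : ℝ) / 2))
    (Rstar : ℝ) (hRstar : Rstar = Real.sqrt m * α / 2) :
    (∀ R : ℝ, 0 < R → R < Rstar →
      Tendsto (fun n : ℕ => -(1 / (n : ℝ)) *
          Real.log (Real.exp (-(n * ρ)) *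
            ∫ x in Metric.closedBall (0 : EuclideanSpace ℝ (Fin n)) (Real.sqrt n * R),
              (lagGaussKernel m α ρ n x) ^ 2))
        atTop
        (nhds (-ρ - (1 / 2) * Real.log (2 * π * Real.exp 1) +
          2 * R ^ 2 / (α ^ 2 * m) - Real.log R))) ∧
    (∀ R : ℝ, Rstar < R →
      Tendsto (fun n : ℕ => -(1 / (n : ℝ)) *
          Real.log (Real.exp (-(n * ρ)) *
            ∫ x in Metric.closedBall (0 : EuclideanSpace ℝ (Fin n)) (Real.sqrt n * R),
              (lagGaussKernel m α ρ n x) ^ 2))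
        atTop
        (nhds (-ρ - Real.log α - (1 / 2) * Real.log ((m : ℝ) * π / 2)))) := by
  have hm0 : (0:ℝ) < (m:ℝ) := by exact_mod_cast hm
  have hceq : Real.sqrt (α^2*(m:ℝ)) = Real.sqrt (m:ℝ) * α := by
    rw [Real.sqrt_mul (sq_nonneg α), Real.sqrt_sq hα_pos.le]
    ring
  have hRs : Rstar = Real.sqrt (α^2*(m:ℝ))/2 := by
    rw [hRstar, hceq]
  have hRspos : 0 < Rstar := by
    rw [hRstar]
    have : 0 < Real.sqrt (m:ℝ) := Real.sqrt_pos.mpr hm0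
    positivity
  have hc : (0:ℝ) < α^2*(m:ℝ) := by positivity
  constructor
  · intro R hR0 hRlt
    have hmin : min R (Real.sqrt (α^2*(m:ℝ))/2) = R := by
      rw [← hRs]
      exact min_eq_left hRlt.le
    have hmaster := LagAux.master m hm ρ α hα_pos hR0
    rw [hmin] at hmaster
    have hval : -ρ - (1 / 2) * Real.log (2 * π * Real.exp 1) +
        2 * R ^ 2 / (α ^ 2 * m) - Real.log R
        = -ρ - (1/2)*Real.log π + (-(Real.log 2)/2 - 1/2)
          - Real.log (LagAux.hfun (α^2*(m:ℝ)) R) := by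
      rw [LagAux.hfun, Real.log_mul hR0.ne' (Real.exp_ne_zero _), Real.log_exp,
        Real.log_mul (by positivity : (2*π : ℝ) ≠ 0) (Real.exp_ne_zero 1),
        Real.log_mul (two_ne_zero) Real.pi_pos.ne', Real.log_exp]
      ring
    rw [hval]
    exact hmaster
  · intro R hRgt
    have hR0 : 0 < R := lt_trans hRspos hRgt
    have hmin : min R (Real.sqrt (α^2*(m:ℝ))/2) = Real.sqrt (α^2*(m:ℝ))/2 := by
      rw [← hRs]
      exact min_eq_right hRgt.le
    have hmaster := LagAux.master m hm ρ α hα_pos hR0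
    rw [hmin] at hmaster
    have hsc : (0:ℝ) < Real.sqrt (α^2*(m:ℝ)) := Real.sqrt_pos.mpr hc
    have hlogh : Real.log (LagAux.hfun (α^2*(m:ℝ)) (Real.sqrt (α^2*(m:ℝ))/2))
        = Real.log (α^2*(m:ℝ))/2 - Real.log 2 - 1/2 := by
      rw [LagAux.hfun, Real.log_mul (by positivity) (Real.exp_ne_zero _), Real.log_exp,
        Real.log_div hsc.ne' two_ne_zero, Real.log_sqrt hc.le]
      have h1 : 2*(Real.sqrt (α^2*(m:ℝ))/2)^2/(α^2*(m:ℝ)) = 1/2 := by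
        rw [div_pow, Real.sq_sqrt hc.le]
        field_simp
      rw [h1]
      ring
    have hval : -ρ - Real.log α - (1 / 2) * Real.log ((m : ℝ) * π / 2)
        = -ρ - (1/2)*Real.log π + (-(Real.log 2)/2 - 1/2)
          - Real.log (LagAux.hfun (α^2*(m:ℝ)) (Real.sqrt (α^2*(m:ℝ))/2)) := by
      rw [hlogh, Real.log_mul (pow_ne_zero 2 hα_pos.ne') hm0.ne', Real.log_pow,
        Real.log_div (by positivity : ((m:ℝ)*π) ≠ 0) two_ne_zero,
        Real.log_mul hm0.ne' Real.pi_pos.ne']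
      push_cast
      ring
    rw [hval]
    exact hmaster
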